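/- Let k ≥ 1 and let G be a nearly k-regular graph on n vertices. Then W^1(G) = nk − 1, W^2(G) = (n−1)k² + (k−1)², W^3(G) = nk³ − 3k² + 2k, and W^4(G) = nk⁴ − 4k³ + 3k² + k − 1. -/

import Mathlib

open SimpleGraph

/-- `F` is contained in `G` as a subgraph (there is an injective map preserving adjacency). -/
def ContainsCopy {α β : Type*} (F : SimpleGraph α) (G : SimpleGraph β) : Prop :=
  ∃ f : α ↪ β, ∀ a b, F.Adj a b → G.Adj (f a) (f b)

/-- The join of two graphs: disjoint union plus all edges between the two parts. -/
def graphJoin {α β : Type*} (G : SimpleGraph α) (H : SimpleGraph β) :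
    SimpleGraph (α ⊕ β) where
  Adj x y :=
    match x, y with
    | Sum.inl a, Sum.inl b => G.Adj a b
    | Sum.inr a, Sum.inr b => H.Adj a b
    | Sum.inl _, Sum.inr _ => True
    | Sum.inr _, Sum.inl _ => True
  symm := ⟨by
    rintro (a | a) (b | b) h
    · exact G.adj_symm h
    · trivial
    · trivial
    · exact H.adj_symm h⟩
  loopless := ⟨by
    rintro (a | a) h
    · exact G.ne_of_adj h rfl
    · exact H.ne_of_adj h rfl⟩

/-- The fan `H_ℓ = K_1 ∨ P_ℓ`. -/
def fan (ℓ : ℕ) : SimpleGraph (Fin 1 ⊕ Fin ℓ) :=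
  graphJoin (⊤ : SimpleGraph (Fin 1)) (pathGraph ℓ)

/-- The degree of a vertex. -/
noncomputable def gdeg {V : Type*} (G : SimpleGraph V) (v : V) : ℕ :=
  (G.neighborSet v).ncard

/-- `G` is `k`-regular. -/
def IsKRegular {V : Type*} (G : SimpleGraph V) (k : ℕ) : Prop :=
  ∀ v, gdeg G v = k

/-- `G` is nearly `k`-regular: all degrees are `k` except one vertex of degree `k-1`. -/
def IsNearlyKRegular {V : Type*} (G : SimpleGraph V) (k : ℕ) : Prop :=
  ∃ u, gdeg G u = k - 1 ∧ ∀ v, v ≠ u → gdeg G v = k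

/-- The adjacency matrix of `G` over `ℝ`. -/
noncomputable def adjMat {V : Type*} (G : SimpleGraph V) : Matrix V V ℝ :=
  letI := Classical.decRel G.Adj
  G.adjMatrix ℝ

/-- The spectral radius of a graph: the largest eigenvalue of its adjacency matrix. -/
noncomputable def specRad {V : Type*} [Fintype V] (G : SimpleGraph V) : ℝ :=
  sSup {μ : ℝ | Module.End.HasEigenvalue (adjMat G).mulVecLin μ}

/-- `SPEX n F`: the `F`-free graphs on `n` vertices of maximum spectral radius. -/
def SPEX (n : ℕ) {α : Type*} (F : SimpleGraph α) : Set (SimpleGraph (Fin n)) :=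
  {G | ¬ ContainsCopy F G ∧
    ∀ H : SimpleGraph (Fin n), ¬ ContainsCopy F H → specRad H ≤ specRad G}

/-- The number of walks of length `ℓ` in `G` (sequences `v₀ v₁ ⋯ v_ℓ` of vertices with
consecutive vertices adjacent). -/
noncomputable def numWalks {V : Type*} (G : SimpleGraph V) (ℓ : ℕ) : ℕ :=
  Set.ncard {p : Fin (ℓ + 1) → V | ∀ i : Fin ℓ, G.Adj (p i.castSucc) (p i.succ)}

open Finset
noncomputable def aI {V : Type*} (G : SimpleGraph V) (x y : V) : ℤ :=
  letI := Classical.dec (G.Adj x y)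
  if G.Adj x y then 1 else 0

lemma aI_def {V : Type*} (G : SimpleGraph V) (x y : V) [inst : Decidable (G.Adj x y)] :
    aI G x y = if G.Adj x y then 1 else 0 := by
  unfold aI; congr

lemma aI_symm {V : Type*} (G : SimpleGraph V) (x y : V) : aI G x y = aI G y x := by
  classical simp [aI_def, G.adj_comm]

lemma aI_self {V : Type*} (G : SimpleGraph V) (x : V) : aI G x x = 0 := by
  classical simp [aI_def]

lemma aI_sq {V : Type*} (G : SimpleGraph V) (x y : V) : aI G x y * aI G x y = aI G x y := by
  classical simp only [aI_def]; split <;> ring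

noncomputable def wf {V : Type*} [Fintype V] (G : SimpleGraph V) : ℕ → V → ℤ
  | 0, _ => 1
  | (ℓ+1), x => ∑ y, aI G x y * wf G ℓ y

lemma sum_aI {V : Type*} [Fintype V] (G : SimpleGraph V) (x : V) :
    ∑ y, aI G x y = (gdeg G x : ℤ) := by
  classical
  rw [gdeg, Set.ncard_eq_toFinset_card']
  rw [show (G.neighborSet x).toFinset = Finset.univ.filter (fun y => G.Adj x y) by
    ext y; rw [Set.mem_toFinset]; simp]
  rw [Finset.card_filter]
  push_cast
  exact Finset.sum_congr rfl fun y _ => by simp [aI_def]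

lemma numWalks_eq_sum {V : Type*} [Fintype V] (G : SimpleGraph V) (ℓ : ℕ) :
    (numWalks G ℓ : ℤ) =
      ∑ p : Fin (ℓ+1) → V, ∏ i : Fin ℓ, aI G (p i.castSucc) (p i.succ) := by
  classical
  rw [numWalks, Set.ncard_eq_toFinset_card']
  rw [show {p : Fin (ℓ + 1) → V | ∀ i : Fin ℓ, G.Adj (p i.castSucc) (p i.succ)}.toFinset
      = Finset.univ.filter (fun p : Fin (ℓ+1) → V => ∀ i : Fin ℓ, G.Adj (p i.castSucc) (p i.succ))
      by ext p; simp]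
  rw [Finset.card_filter]
  push_cast
  refine Finset.sum_congr rfl fun p _ => ?_
  have h2 : (∏ i : Fin ℓ, aI G (p i.castSucc) (p i.succ))
      = if ∀ i : Fin ℓ, G.Adj (p i.castSucc) (p i.succ) then (1:ℤ) else 0 := by
    by_cases h : ∀ i : Fin ℓ, G.Adj (p i.castSucc) (p i.succ)
    · rw [if_pos h]
      exact Finset.prod_eq_one fun i _ => by simp [aI_def, h i]
    · rw [if_neg h]
      push_neg at h
      obtain ⟨i, hi⟩ := h
      exact Finset.prod_eq_zero (Finset.mem_univ i) (by simp [aI_def, hi])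
  rw [h2]

lemma walkSum {V : Type*} [Fintype V] (G : SimpleGraph V) :
    ∀ (ℓ : ℕ) (g : V → ℤ),
    ∑ p : Fin (ℓ+1) → V, (∏ i : Fin ℓ, aI G (p i.castSucc) (p i.succ)) * g (p 0) =
      ∑ x, wf G ℓ x * g x
  | 0, g => by
    rw [← Fintype.sum_equiv (Equiv.funUnique (Fin 1) V).symm
      (fun x => wf G 0 x * g x) _ (fun p => rfl)]
  | (ℓ+1), g => by
    have he := Fintype.sum_equiv (Fin.consEquiv (fun _ : Fin (ℓ+2) => V))
      (fun xq : V × (Fin (ℓ+1) → V) =>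
        (aI G xq.1 (xq.2 0) * ∏ i : Fin ℓ, aI G (xq.2 i.castSucc) (xq.2 i.succ)) * g xq.1)
      (fun p : Fin (ℓ+2) → V => (∏ i : Fin (ℓ+1), aI G (p i.castSucc) (p i.succ)) * g (p 0))
      ?_
    · rw [← he, Fintype.sum_prod_type]
      have inner : ∀ x : V,
          (∑ q : Fin (ℓ+1) → V,
            (aI G x (q 0) * ∏ i : Fin ℓ, aI G (q i.castSucc) (q i.succ)) * g x)
          = wf G (ℓ+1) x * g x := by
        intro x
        rw [show (∑ q : Fin (ℓ+1) → V,
            (aI G x (q 0) * ∏ i : Fin ℓ, aI G (q i.castSucc) (q i.succ)) * g x)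
          = (∑ q : Fin (ℓ+1) → V,
            (∏ i : Fin ℓ, aI G (q i.castSucc) (q i.succ)) * aI G x (q 0)) * g x by
            rw [Finset.sum_mul]; exact Finset.sum_congr rfl fun q _ => by ring]
        rw [walkSum G ℓ (fun y => aI G x y)]
        show (∑ y, wf G ℓ y * aI G x y) * g x = (∑ y, aI G x y * wf G ℓ y) * g x
        congr 1
        exact Finset.sum_congr rfl fun y _ => by ring
      exact Finset.sum_congr rfl fun x _ => inner x
    · rintro ⟨x, q⟩
      have h0 : (Fin.consEquiv (fun _ : Fin (ℓ+2) => V)) (x, q) = Fin.cons x q := rfl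
      rw [h0]
      simp [Fin.prod_univ_succ, Fin.cons_succ, ← Fin.succ_castSucc]

lemma numWalks_eq_wf {V : Type*} [Fintype V] (G : SimpleGraph V) (ℓ : ℕ) :
    (numWalks G ℓ : ℤ) = ∑ x, wf G ℓ x := by
  rw [numWalks_eq_sum]
  have := walkSum G ℓ (fun _ => 1)
  simpa using this

/-- the numbers of walks of lengths `1`, `2`, `3`, `4` in a nearly
`k`-regular graph on `n` vertices. -/
theorem numWalks_nearly_regular (k n : ℕ) (hk : 1 ≤ k)
    (G : SimpleGraph (Fin n)) (hG : IsNearlyKRegular G k) :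
    (numWalks G 1 : ℤ) = (n : ℤ) * k - 1 ∧
    (numWalks G 2 : ℤ) = ((n : ℤ) - 1) * (k : ℤ) ^ 2 + ((k : ℤ) - 1) ^ 2 ∧
    (numWalks G 3 : ℤ) = (n : ℤ) * (k : ℤ) ^ 3 - 3 * (k : ℤ) ^ 2 + 2 * k ∧
    (numWalks G 4 : ℤ) = (n : ℤ) * (k : ℤ) ^ 4 - 4 * (k : ℤ) ^ 3 + 3 * (k : ℤ) ^ 2
      + (k : ℤ) - 1 := by
  classical
  obtain ⟨u, hu, hv⟩ := hG
  have hdeg : ∀ x : Fin n, ∑ y, aI G x y = (k:ℤ) - (if x = u then 1 else 0) := by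
    intro x
    rw [sum_aI]
    by_cases hx : x = u
    · subst hx; rw [hu, if_pos rfl]
      have : ((k - 1 : ℕ) : ℤ) = (k:ℤ) - 1 := by omega
      rw [this]
    · rw [hv x hx, if_neg hx]; ring
  have hcol : ∀ y : Fin n, ∑ x, aI G x y = (k:ℤ) - (if y = u then 1 else 0) := by
    intro y; rw [← hdeg y]; exact Finset.sum_congr rfl fun x _ => aI_symm G x y
  have hwf1 : ∀ x, wf G 1 x = (k:ℤ) - (if x = u then 1 else 0) := by
    intro x
    rw [show wf G 1 x = ∑ y, aI G x y * wf G 0 y from rfl]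
    rw [show (∑ y, aI G x y * wf G 0 y) = ∑ y, aI G x y from
      Finset.sum_congr rfl fun y _ => by rw [show wf G 0 y = 1 from rfl, mul_one]]
    exact hdeg x
  have hcolu : ∑ x, aI G x u = (k:ℤ) - 1 := by rw [hcol u]; simp
  have S1 : ∑ x, wf G 1 x = (n:ℤ) * k - 1 := by
    rw [Finset.sum_congr rfl fun x _ => hwf1 x, Finset.sum_sub_distrib]
    simp [mul_comm]
  have hwf2 : ∀ x, wf G 2 x = (k:ℤ) * wf G 1 x - aI G x u := by
    intro x
    rw [show wf G 2 x = ∑ y, aI G x y * wf G 1 y from rfl]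
    have e : ∀ y, aI G x y * wf G 1 y
        = (k:ℤ) * (aI G x y * wf G 0 y) - (if y = u then aI G x y else 0) := by
      intro y
      rw [hwf1 y, show wf G 0 y = 1 from rfl]
      split <;> ring
    rw [Finset.sum_congr rfl fun y _ => e y, Finset.sum_sub_distrib, ← Finset.mul_sum]
    rw [show (∑ y, aI G x y * wf G 0 y) = wf G 1 x from rfl]
    congr 1
    simp
  have S2 : ∑ x, wf G 2 x = (k:ℤ) * ((n:ℤ) * k - 1) - ((k:ℤ) - 1) := by
    rw [Finset.sum_congr rfl fun x _ => hwf2 x, Finset.sum_sub_distrib, ← Finset.mul_sum,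
      S1, hcolu]
  have SB : ∑ x : Fin n, ∑ y, aI G x y * aI G y u = (k:ℤ) * ((k:ℤ) - 1) := by
    rw [Finset.sum_comm]
    have e : ∀ y : Fin n, ∑ x, aI G x y * aI G y u
        = (k:ℤ) * aI G y u - (if y = u then aI G y u else 0) := by
      intro y
      rw [← Finset.sum_mul, hcol y]
      split <;> ring
    rw [Finset.sum_congr rfl fun y _ => e y, Finset.sum_sub_distrib, ← Finset.mul_sum, hcolu]
    simp [aI_self]
  have hwf3 : ∀ x, wf G 3 x = (k:ℤ) * wf G 2 x - ∑ y, aI G x y * aI G y u := by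
    intro x
    rw [show wf G 3 x = ∑ y, aI G x y * wf G 2 y from rfl]
    have e : ∀ y, aI G x y * wf G 2 y
        = (k:ℤ) * (aI G x y * wf G 1 y) - aI G x y * aI G y u := by
      intro y; rw [hwf2 y]; ring
    rw [Finset.sum_congr rfl fun y _ => e y, Finset.sum_sub_distrib, ← Finset.mul_sum]
    rw [show (∑ y, aI G x y * wf G 1 y) = wf G 2 x from rfl]
  have S3 : ∑ x, wf G 3 x
      = (k:ℤ) * ((k:ℤ) * ((n:ℤ) * k - 1) - ((k:ℤ) - 1)) - (k:ℤ) * ((k:ℤ) - 1) := by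
    rw [Finset.sum_congr rfl fun x _ => hwf3 x, Finset.sum_sub_distrib, ← Finset.mul_sum,
      S2, SB]
  have Bu : ∑ y, aI G u y * aI G y u = (k:ℤ) - 1 := by
    have e : ∀ y, aI G u y * aI G y u = aI G u y := by
      intro y; rw [aI_symm G y u]; exact aI_sq G u y
    rw [Finset.sum_congr rfl fun y _ => e y, hdeg u]; simp
  have SC : ∑ x : Fin n, ∑ y, aI G x y * (∑ z, aI G y z * aI G z u)
      = (k:ℤ) * ((k:ℤ) * ((k:ℤ) - 1)) - ((k:ℤ) - 1) := by
    rw [Finset.sum_comm]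
    have e : ∀ y : Fin n, ∑ x, aI G x y * (∑ z, aI G y z * aI G z u)
        = (k:ℤ) * (∑ z, aI G y z * aI G z u)
          - (if y = u then (∑ z, aI G y z * aI G z u) else 0) := by
      intro y
      rw [← Finset.sum_mul, hcol y]
      split <;> ring
    rw [Finset.sum_congr rfl fun y _ => e y, Finset.sum_sub_distrib, ← Finset.mul_sum, SB]
    simp [Bu]
  have hwf4 : ∀ x, wf G 4 x
      = (k:ℤ) * wf G 3 x - ∑ y, aI G x y * (∑ z, aI G y z * aI G z u) := by
    intro x
    rw [show wf G 4 x = ∑ y, aI G x y * wf G 3 y from rfl]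
    have e : ∀ y, aI G x y * wf G 3 y
        = (k:ℤ) * (aI G x y * wf G 2 y) - aI G x y * (∑ z, aI G y z * aI G z u) := by
      intro y; rw [hwf3 y]; ring
    rw [Finset.sum_congr rfl fun y _ => e y, Finset.sum_sub_distrib, ← Finset.mul_sum]
    rw [show (∑ y, aI G x y * wf G 2 y) = wf G 3 x from rfl]
  have S4 : ∑ x, wf G 4 x
      = (k:ℤ) * ((k:ℤ) * ((k:ℤ) * ((n:ℤ) * k - 1) - ((k:ℤ) - 1)) - (k:ℤ) * ((k:ℤ) - 1))
        - ((k:ℤ) * ((k:ℤ) * ((k:ℤ) - 1)) - ((k:ℤ) - 1)) := by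
    rw [Finset.sum_congr rfl fun x _ => hwf4 x, Finset.sum_sub_distrib, ← Finset.mul_sum,
      S3, SC]
  refine ⟨?_, ?_, ?_, ?_⟩ <;> rw [numWalks_eq_wf]
  · rw [S1]
  · rw [S2]; ring
  · rw [S3]; ring
  · rw [S4]; ring
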